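/- Let n be a positive integer. For k ∈ Ξ_n define ℓ_k(x) := λ_k · (1/4) · Σ_{(ε₁,ε₂) ∈ {−1,1}²} Φ_n^*(ε₁x₁ − k₁/(2n), ε₂x₂ − k₂/(2n)). Then for every function f : ℝ² → ℂ and every j ∈ Ξ_n, Σ_{k ∈ Ξ_n} f(k/(2n)) · ℓ_k(j/(2n)) = f(j/(2n)); equivalently, ℓ_k(j/(2n)) = δ_{k,j} for all j, k ∈ Ξ_n. -/

import Mathlib

open MeasureTheory Complex

attribute [local instance] Classical.propDecidable

/-- The exponential e_k(x) = exp(2 pi i (k1 x1 + k2 x2)). -/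
noncomputable def e2 (k : ℤ × ℤ) (x : ℝ × ℝ) : ℂ :=
  Complex.exp (2 * Real.pi * Complex.I * ((k.1 : ℂ) * x.1 + (k.2 : ℂ) * x.2))

/-- The point k/(2n) in the plane. -/
noncomputable def pt2 (n : ℕ) (k : ℤ × ℤ) : ℝ × ℝ :=
  ((k.1 : ℝ) / (2 * n), (k.2 : ℝ) / (2 * n))

/-- Λ_m^* = {j : |j1+j2| ≤ m and |j1-j2| ≤ m}. -/
noncomputable def LamStar (m : ℕ) : Finset (ℤ × ℤ) :=
  (Finset.Icc (-(m : ℤ), -(m : ℤ)) ((m : ℤ), (m : ℤ))).filter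
    fun j => |j.1 + j.2| ≤ (m : ℤ) ∧ |j.1 - j.2| ≤ (m : ℤ)

/-- The weight c̃_ν on Λ_n^*. -/
noncomputable def ctilde (n : ℕ) (ν : ℤ × ℤ) : ℝ :=
  if |ν.1 + ν.2| < (n : ℤ) ∧ |ν.1 - ν.2| < (n : ℤ) then 1
  else if |ν.1 + ν.2| = (n : ℤ) ∧ |ν.1 - ν.2| = (n : ℤ) then 1/4
  else 1/2

/-- Φ_n^*(x) = (1/(2n²)) Σ_{ν ∈ Λ_n^*} c̃_ν e_ν(x). -/
noncomputable def PhiStar (n : ℕ) (x : ℝ × ℝ) : ℂ :=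
  (1 / (2 * (n : ℂ) ^ 2)) * ∑ ν ∈ LamStar n, (ctilde n ν : ℂ) * e2 ν x

/-- Ξ_n = {k : 0 ≤ k_i ≤ n, k1 ≡ k2 (mod 2)}. -/
noncomputable def Xi2 (n : ℕ) : Finset (ℤ × ℤ) :=
  (Finset.Icc ((0 : ℤ), (0 : ℤ)) ((n : ℤ), (n : ℤ))).filter
    fun k => k.1 % 2 = k.2 % 2

/-- The cubature weight λ_k on Ξ_n. -/
noncomputable def lam2 (n : ℕ) (k : ℤ × ℤ) : ℝ :=
  if (0 < k.1 ∧ k.1 < (n : ℤ)) ∧ (0 < k.2 ∧ k.2 < (n : ℤ)) then 4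
  else if (k.1 = 0 ∨ k.1 = (n : ℤ)) ∧ (k.2 = 0 ∨ k.2 = (n : ℤ)) then 1
  else 2

/-- The fundamental interpolation function ℓ_k. -/
noncomputable def ell2 (n : ℕ) (k : ℤ × ℤ) (x : ℝ × ℝ) : ℂ :=
  (lam2 n k : ℂ) * (1 / 4) *
    ∑ ε ∈ (({-1, 1} : Finset ℤ) ×ˢ ({-1, 1} : Finset ℤ)),
      PhiStar n ((ε.1 : ℝ) * x.1 - (k.1 : ℝ) / (2 * n), (ε.2 : ℝ) * x.2 - (k.2 : ℝ) / (2 * n))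

noncomputable def EE (n : ℕ) (t : ℤ) : ℂ := Complex.exp (Real.pi * Complex.I * t / n)

lemma EE_add (n : ℕ) (a b : ℤ) : EE n (a + b) = EE n a * EE n b := by
  rw [EE, EE, EE, ← Complex.exp_add]; congr 1; push_cast; ring

lemma EE_mul (n : ℕ) (u p : ℤ) : EE n (u * p) = EE n p ^ u := by
  rw [EE, EE, ← Complex.exp_int_mul]; congr 1; push_cast; ring

lemma EE_n (n : ℕ) (hn : 0 < n) : EE n n = -1 := by
  have h : ((n:ℂ)) ≠ 0 := by exact_mod_cast hn.ne'
  rw [EE]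
  have : (Real.pi : ℂ) * Complex.I * (n:ℤ) / n = Real.pi * Complex.I := by
    push_cast; field_simp
  rw [this, Complex.exp_pi_mul_I]

lemma EE_eq_one_iff (n : ℕ) (hn : 0 < n) (p : ℤ) : EE n p = 1 ↔ (2 * n : ℤ) ∣ p := by
  rw [EE, Complex.exp_eq_one_iff]
  have hπ : (Real.pi : ℂ) ≠ 0 := by exact_mod_cast Real.pi_ne_zero
  have hI : Complex.I ≠ 0 := Complex.I_ne_zero
  have h : ((n:ℂ)) ≠ 0 := by exact_mod_cast hn.ne'
  constructor
  · rintro ⟨m, hm⟩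
    refine ⟨m, ?_⟩
    field_simp at hm
    have : (p : ℂ) = 2 * n * m := by
      have h2 : (Real.pi : ℂ) * Complex.I * p = Real.pi * Complex.I * (2 * n * m) := by
        rw [hm]; ring_nf
      exact mul_left_cancel₀ (by simp [hπ, hI]) h2
    exact_mod_cast this
  · rintro ⟨m, hm⟩
    refine ⟨m, ?_⟩
    rw [hm]; push_cast; field_simp

lemma EE_ne_zero (n : ℕ) (t : ℤ) : EE n t ≠ 0 := Complex.exp_ne_zero _

lemma sum_Icc_zpow (z : ℂ) (hz : z ≠ 0) (n : ℕ) :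
    ∑ u ∈ Finset.Icc (-(n:ℤ)) n, z ^ u = z⁻¹ ^ (n:ℕ) * ∑ i ∈ Finset.range (2*n+1), z ^ i := by
  rw [Finset.mul_sum]
  refine Finset.sum_nbij' (fun u => (u + n).toNat) (fun i => (i : ℤ) - n) ?_ ?_ ?_ ?_ ?_
  · intro u hu; simp only [Finset.mem_Icc] at hu; simp only [Finset.mem_range]; omega
  · intro i hi; simp only [Finset.mem_range] at hi; simp only [Finset.mem_Icc]; omega
  · intro u hu; simp only [Finset.mem_Icc] at hu; omega
  · intro i hi; simp only [Finset.mem_range] at hi; omega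
  · intro u hu
    simp only [Finset.mem_Icc] at hu
    have h1 : (((u + n).toNat) : ℤ) = u + n := by omega
    have h2 : z ^ ((u + (n:ℤ)).toNat) = z ^ (u + (n:ℤ)) := by rw [← zpow_natCast, h1]
    rw [h2, inv_pow, ← zpow_natCast z, ← zpow_neg, ← zpow_add₀ hz]
    congr 1; ring

lemma oneD (n : ℕ) (hn : 0 < n) (p : ℤ) :
    ∑ u ∈ Finset.Icc (-(n:ℤ)) n, (if |u| = (n:ℤ) then (1/2:ℂ) else 1) * EE n (u*p)
      = if (2*(n:ℤ)) ∣ p then (2*n : ℂ) else 0 := by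
  set z := EE n p with hzdef
  have hz0 : z ≠ 0 := EE_ne_zero n p
  have hsplit : ∀ u ∈ Finset.Icc (-(n:ℤ)) n,
      (if |u| = (n:ℤ) then (1/2:ℂ) else 1) * EE n (u*p)
      = z ^ u - (if u = (n:ℤ) then (1/2) * z ^ u else 0) - (if u = -(n:ℤ) then (1/2) * z ^ u else 0) := by
    intro u hu
    rw [EE_mul]
    by_cases h1 : u = (n:ℤ)
    · subst h1
      simp [Int.abs_natCast, (show ¬((n:ℤ) = -(n:ℤ)) by omega)]
      ring
    · by_cases h2 : u = -(n:ℤ)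
      · subst h2
        simp [abs_neg, Int.abs_natCast, h1]
        ring
      · have habs : ¬ |u| = (n:ℤ) := by rcases abs_cases u with ⟨h,_⟩|⟨h,_⟩ <;> omega
        simp [h1, h2, habs, hzdef]
  rw [Finset.sum_congr rfl hsplit]
  rw [Finset.sum_sub_distrib, Finset.sum_sub_distrib]
  have hmem1 : (n:ℤ) ∈ Finset.Icc (-(n:ℤ)) n := by simp
  have hmem2 : (-(n:ℤ)) ∈ Finset.Icc (-(n:ℤ)) n := by simp [Finset.mem_Icc]
  rw [Finset.sum_ite_eq' _ ((n:ℤ)) (fun u => (1/2:ℂ) * z ^ u),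
      Finset.sum_ite_eq' _ (-(n:ℤ)) (fun u => (1/2:ℂ) * z ^ u)]
  simp only [hmem1, hmem2, if_true]
  have hnn : z ^ ((n:ℕ):ℤ) = z ^ (n:ℕ) := zpow_natCast z n
  by_cases hdvd : (2*(n:ℤ)) ∣ p
  · have hz1 : z = 1 := (EE_eq_one_iff n hn p).mpr hdvd
    rw [if_pos hdvd]
    simp [hz1, Int.card_Icc]
    have hc : ((n:ℤ) + 1 + n).toNat = 2*n + 1 := by omega
    rw [hc]
    push_cast
    ring
  · have hz1 : z ≠ 1 := fun h => hdvd ((EE_eq_one_iff n hn p).mp h)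
    have hz2n : z ^ (2*n : ℕ) = 1 := by
      have : z ^ (((2*n : ℕ)):ℤ) = 1 := by
        rw [← EE_mul, EE_eq_one_iff n hn]; push_cast; exact ⟨p, by ring⟩
      rw [← zpow_natCast]; exact this
    have hgeom : ∑ i ∈ Finset.range (2*n+1), z ^ i = 1 := by
      rw [geom_sum_eq hz1, pow_succ, hz2n, one_mul]
      exact div_self (sub_ne_zero.mpr hz1)
    have hsq : z ^ ((n:ℕ):ℤ) * z ^ ((n:ℕ):ℤ) = 1 := by
      rw [← zpow_add₀ hz0]
      have : ((n:ℕ):ℤ) + ((n:ℕ):ℤ) = (((2*n:ℕ)):ℤ) := by push_cast; ring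
      rw [this, zpow_natCast]; exact hz2n
    have hzn : z ^ (-((n:ℕ):ℤ)) = z ^ ((n:ℕ):ℤ) := by
      rw [zpow_neg]; exact inv_eq_of_mul_eq_one_left hsq
    have hinv : z⁻¹ ^ (n:ℕ) = z ^ (-((n:ℕ):ℤ)) := by
      rw [inv_pow, ← zpow_natCast, zpow_neg]
    rw [sum_Icc_zpow z hz0, hgeom, if_neg hdvd, mul_one, hinv, hzn]
    ring

lemma EE_n_mul (n : ℕ) (hn : 0 < n) (t : ℤ) :
    EE n (n * t) = if t % 2 = 0 then 1 else -1 := by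
  rw [mul_comm, EE_mul, EE_n n hn]
  by_cases ht : t % 2 = 0
  · obtain ⟨s, hs⟩ : ∃ s, t = 2 * s := ⟨t/2, by omega⟩
    rw [if_pos ht, hs, zpow_mul]
    norm_num
  · obtain ⟨s, hs⟩ : ∃ s, t = 2 * s + 1 := ⟨t/2, by omega⟩
    rw [if_neg ht, hs, zpow_add₀ (by norm_num : (-1:ℂ) ≠ 0), zpow_mul]
    norm_num

lemma e2_eval (n : ℕ) (hn : 0 < n) (ν m : ℤ × ℤ) :
    e2 ν (pt2 n m) = EE n (ν.1 * m.1 + ν.2 * m.2) := by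
  rw [e2, pt2, EE]
  congr 1
  have h : ((n:ℂ)) ≠ 0 := by exact_mod_cast hn.ne'
  push_cast
  field_simp

lemma sum_LamStar_eq (n : ℕ) (f : ℤ × ℤ → ℂ) :
    ∑ w ∈ (Finset.Icc (-(n:ℤ)) n ×ˢ Finset.Icc (-(n:ℤ)) n).filter
        (fun w => (w.1 + w.2) % 2 = 0), f w
      = ∑ ν ∈ LamStar n, f (ν.1 + ν.2, ν.1 - ν.2) := by
  refine Finset.sum_nbij' (fun w => ((w.1 + w.2)/2, (w.1 - w.2)/2))
    (fun ν => (ν.1 + ν.2, ν.1 - ν.2)) ?_ ?_ ?_ ?_ ?_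
  · intro w hw
    simp only [Finset.mem_filter, Finset.mem_product, Finset.mem_Icc] at hw
    simp only [LamStar, Finset.mem_filter, Finset.mem_Icc, Prod.mk_le_mk]
    obtain ⟨⟨⟨h1,h2⟩,⟨h3,h4⟩⟩, hp⟩ := hw
    constructor
    · constructor <;> constructor <;> omega
    · constructor <;> rw [abs_le] <;> constructor <;> omega
  · intro ν hν
    simp only [LamStar, Finset.mem_filter, Finset.mem_Icc, Prod.mk_le_mk] at hν
    simp only [Finset.mem_filter, Finset.mem_product, Finset.mem_Icc]
    obtain ⟨⟨⟨h1,h2⟩,⟨h3,h4⟩⟩, ha, hb⟩ := hν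
    rw [abs_le] at ha hb
    refine ⟨⟨⟨?_,?_⟩,⟨?_,?_⟩⟩, ?_⟩ <;> omega
  · intro w hw
    simp only [Finset.mem_filter, Finset.mem_product, Finset.mem_Icc] at hw
    obtain ⟨_, hp⟩ := hw
    dsimp only
    ext <;> dsimp <;> omega
  · intro ν hν
    dsimp only
    ext <;> dsimp <;> omega
  · intro w hw
    simp only [Finset.mem_filter, Finset.mem_product, Finset.mem_Icc] at hw
    obtain ⟨_, hp⟩ := hw
    dsimp only
    congr 1
    ext <;> dsimp <;> omega

lemma ctilde_factor (n : ℕ) (ν : ℤ × ℤ) (h1 : |ν.1 + ν.2| ≤ (n:ℤ)) (h2 : |ν.1 - ν.2| ≤ (n:ℤ)) :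
    ((ctilde n ν : ℝ) : ℂ)
      = (if |ν.1 + ν.2| = (n:ℤ) then (1/2:ℂ) else 1) * (if |ν.1 - ν.2| = (n:ℤ) then (1/2:ℂ) else 1) := by
  rw [ctilde]
  by_cases ha : |ν.1 + ν.2| = (n:ℤ) <;> by_cases hb : |ν.1 - ν.2| = (n:ℤ)
  · rw [if_neg (by omega), if_pos ⟨ha, hb⟩, if_pos ha, if_pos hb]; norm_num
  · rw [if_neg (by omega), if_neg (by tauto), if_pos ha, if_neg hb]; norm_num
  · rw [if_neg (by omega), if_neg (by tauto), if_neg ha, if_pos hb]; norm_num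
  · rw [if_pos ⟨by omega, by omega⟩, if_neg ha, if_neg hb]; norm_num

lemma Phi_eval (n : ℕ) (hn : 0 < n) (m : ℤ × ℤ) (hpar : (m.1 + m.2) % 2 = 0) :
    PhiStar n (pt2 n m) = if ((2*(n:ℤ)) ∣ m.1 ∧ (2*(n:ℤ)) ∣ m.2) then 1 else 0 := by
  obtain ⟨P, Q, hPQ1, hPQ2⟩ : ∃ P Q : ℤ, m.1 = P + Q ∧ m.2 = P - Q :=
    ⟨(m.1+m.2)/2, (m.1-m.2)/2, by omega, by omega⟩
  have hnC : ((n:ℂ)) ≠ 0 := by exact_mod_cast hn.ne'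
  set a : ℤ → ℂ := fun u => if |u| = (n:ℤ) then (1/2:ℂ) else 1 with ha_def
  set g : ℤ × ℤ → ℂ := fun w => (a w.1 * a w.2) * EE n (w.1 * P + w.2 * Q) with hg_def
  rw [PhiStar]
  have step1 : ∑ ν ∈ LamStar n, (ctilde n ν : ℂ) * e2 ν (pt2 n m)
      = ∑ ν ∈ LamStar n, g (ν.1 + ν.2, ν.1 - ν.2) := by
    refine Finset.sum_congr rfl fun ν hν => ?_
    simp only [LamStar, Finset.mem_filter] at hν
    obtain ⟨-, ha, hb⟩ := hν
    rw [e2_eval n hn, ctilde_factor n ν ha hb, hg_def]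
    dsimp only
    have harg2 : ν.1 * m.1 + ν.2 * m.2 = (ν.1 + ν.2) * P + (ν.1 - ν.2) * Q := by
      rw [hPQ1, hPQ2]; ring
    rw [harg2]
  rw [step1, ← sum_LamStar_eq n g, Finset.sum_filter]
  have point : ∀ w ∈ (Finset.Icc (-(n:ℤ)) n ×ˢ Finset.Icc (-(n:ℤ)) n),
      (if (w.1 + w.2) % 2 = 0 then g w else 0)
      = (1/2) * ((a w.1 * EE n (w.1 * P)) * (a w.2 * EE n (w.2 * Q))
          + (a w.1 * EE n (w.1 * (P + n))) * (a w.2 * EE n (w.2 * (Q + n)))) := by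
    intro w _
    have e1 : EE n (w.1 * (P + n)) = EE n (w.1 * P) * EE n (n * w.1) := by
      rw [← EE_add]; congr 1; ring
    have e2' : EE n (w.2 * (Q + n)) = EE n (w.2 * Q) * EE n (n * w.2) := by
      rw [← EE_add]; congr 1; ring
    have e3 : g w = (a w.1 * a w.2) * (EE n (w.1 * P) * EE n (w.2 * Q)) := by
      rw [hg_def]; dsimp only; rw [← EE_add]
    rw [e1, e2', e3, EE_n_mul n hn, EE_n_mul n hn]
    by_cases h1 : w.1 % 2 = 0 <;> by_cases h2 : w.2 % 2 = 0
    · rw [if_pos (by omega), if_pos h1, if_pos h2]; ring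
    · rw [if_neg (by omega), if_pos h1, if_neg h2]; ring
    · rw [if_neg (by omega), if_neg h1, if_pos h2]; ring
    · rw [if_pos (by omega), if_neg h1, if_neg h2]; ring
  rw [Finset.sum_congr rfl point, Finset.sum_product]
  have inner : ∀ u : ℤ, ∑ v ∈ Finset.Icc (-(n:ℤ)) n,
      (1/2) * ((a u * EE n (u * P)) * (a v * EE n (v * Q))
        + (a u * EE n (u * (P + n))) * (a v * EE n (v * (Q + n))))
      = (1/2) * ((a u * EE n (u * P)) * (∑ v ∈ Finset.Icc (-(n:ℤ)) n, a v * EE n (v * Q))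
        + (a u * EE n (u * (P + n))) * (∑ v ∈ Finset.Icc (-(n:ℤ)) n, a v * EE n (v * (Q + n)))) := by
    intro u
    rw [← Finset.mul_sum, Finset.sum_add_distrib, ← Finset.mul_sum, ← Finset.mul_sum]
  rw [Finset.sum_congr rfl (fun u _ => inner u)]
  have outer : ∑ u ∈ Finset.Icc (-(n:ℤ)) n,
      (1/2) * ((a u * EE n (u * P)) * (∑ v ∈ Finset.Icc (-(n:ℤ)) n, a v * EE n (v * Q))
        + (a u * EE n (u * (P + n))) * (∑ v ∈ Finset.Icc (-(n:ℤ)) n, a v * EE n (v * (Q + n))))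
      = (1/2) * ((∑ u ∈ Finset.Icc (-(n:ℤ)) n, a u * EE n (u * P)) * (∑ v ∈ Finset.Icc (-(n:ℤ)) n, a v * EE n (v * Q))
        + (∑ u ∈ Finset.Icc (-(n:ℤ)) n, a u * EE n (u * (P + n))) * (∑ v ∈ Finset.Icc (-(n:ℤ)) n, a v * EE n (v * (Q + n)))) := by
    rw [← Finset.mul_sum, Finset.sum_add_distrib, ← Finset.sum_mul, ← Finset.sum_mul]
  have honeD : ∀ p : ℤ, ∑ u ∈ Finset.Icc (-(n:ℤ)) n, a u * EE n (u * p)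
      = if (2*(n:ℤ)) ∣ p then (2*n : ℂ) else 0 := fun p => oneD n hn p
  rw [outer, honeD P, honeD Q, honeD (P+n), honeD (Q+n)]
  have hndvd : ∀ x : ℤ, ¬((2*(n:ℤ)) ∣ x ∧ (2*(n:ℤ)) ∣ (x+n)) := by
    rintro x ⟨h1, h2⟩
    have h3 : (2*(n:ℤ)) ∣ (n:ℤ) := by
      have := dvd_sub h2 h1
      simpa using this
    have h4 := Int.le_of_dvd (by exact_mod_cast hn) h3
    omega
  have equiv : ((2*(n:ℤ)) ∣ m.1 ∧ (2*(n:ℤ)) ∣ m.2) ↔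
      (((2*(n:ℤ)) ∣ P ∧ (2*(n:ℤ)) ∣ Q) ∨ ((2*(n:ℤ)) ∣ (P+n) ∧ (2*(n:ℤ)) ∣ (Q+n))) := by
    constructor
    · rintro ⟨h1, h2⟩
      rw [hPQ1] at h1; rw [hPQ2] at h2
      obtain ⟨c, hc⟩ := h1
      obtain ⟨d, hd⟩ := h2
      have hP : P = n * (c + d) := by linarith [hc, hd]
      have hQ : Q = n * (c - d) := by linarith [hc, hd]
      by_cases hcd : (c + d) % 2 = 0
      · left
        obtain ⟨t, ht⟩ : ∃ t, c + d = 2 * t := ⟨(c+d)/2, by omega⟩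
        have ht2 : c - d = 2 * (t - d) := by omega
        exact ⟨⟨t, by rw [hP, ht]; ring⟩, ⟨t - d, by rw [hQ, ht2]; ring⟩⟩
      · right
        obtain ⟨t, ht⟩ : ∃ t, c + d = 2 * t + 1 := ⟨(c+d)/2, by omega⟩
        have ht2 : c - d = 2 * (t - d) + 1 := by omega
        exact ⟨⟨t + 1, by rw [hP, ht]; ring⟩, ⟨t - d + 1, by rw [hQ, ht2]; ring⟩⟩
    · rintro (⟨⟨c,hc⟩,⟨d,hd⟩⟩ | ⟨⟨c,hc⟩,⟨d,hd⟩⟩)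
      · exact ⟨⟨c + d, by rw [hPQ1, hc, hd]; ring⟩, ⟨c - d, by rw [hPQ2, hc, hd]; ring⟩⟩
      · constructor
        · refine ⟨c + d - 1, ?_⟩
          rw [hPQ1]; linarith [hc, hd]
        · refine ⟨c - d, ?_⟩
          rw [hPQ2]; linarith [hc, hd]
  by_cases hm : (2*(n:ℤ)) ∣ m.1 ∧ (2*(n:ℤ)) ∣ m.2
  · rw [if_pos hm]
    rcases equiv.mp hm with ⟨hA, hB⟩ | ⟨hA, hB⟩
    · have hA' : ¬ (2*(n:ℤ)) ∣ (P + n) := fun h => hndvd P ⟨hA, h⟩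
      rw [if_pos hA, if_pos hB, if_neg hA']
      field_simp
      ring
    · have hA' : ¬ (2*(n:ℤ)) ∣ P := fun h => hndvd P ⟨h, hA⟩
      rw [if_pos hA, if_pos hB, if_neg hA']
      field_simp
      ring
  · rw [if_neg hm]
    have h1 : ¬((2*(n:ℤ)) ∣ P ∧ (2*(n:ℤ)) ∣ Q) := fun h => hm (equiv.mpr (Or.inl h))
    have h2 : ¬((2*(n:ℤ)) ∣ (P+n) ∧ (2*(n:ℤ)) ∣ (Q+n)) := fun h => hm (equiv.mpr (Or.inr h))
    have z1 : (if (2*(n:ℤ)) ∣ P then (2*n:ℂ) else 0) * (if (2*(n:ℤ)) ∣ Q then (2*n:ℂ) else 0) = 0 := by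
      by_cases hA : (2*(n:ℤ)) ∣ P
      · rw [if_neg (fun hB => h1 ⟨hA, hB⟩)]; ring
      · rw [if_neg hA]; ring
    have z2 : (if (2*(n:ℤ)) ∣ (P+n) then (2*n:ℂ) else 0) * (if (2*(n:ℤ)) ∣ (Q+n) then (2*n:ℂ) else 0) = 0 := by
      by_cases hA : (2*(n:ℤ)) ∣ (P+n)
      · rw [if_neg (fun hB => h2 ⟨hA, hB⟩)]; ring
      · rw [if_neg hA]; ring
    rw [z1, z2]
    ring



lemma mem_Xi2 (n : ℕ) (k : ℤ × ℤ) : k ∈ Xi2 n ↔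
    (0 ≤ k.1 ∧ k.1 ≤ (n:ℤ)) ∧ (0 ≤ k.2 ∧ k.2 ≤ (n:ℤ)) ∧ k.1 % 2 = k.2 % 2 := by
  simp only [Xi2, Finset.mem_filter, Finset.mem_Icc, Prod.le_def]
  tauto

lemma dvd_sub_iff (n : ℕ) (hn : 0 < n) (a b : ℤ) (ha : 0 ≤ a) (ha' : a ≤ n)
    (hb : 0 ≤ b) (hb' : b ≤ n) : (2*(n:ℤ)) ∣ (1*a - b) ↔ a = b := by
  constructor
  · intro h
    have := Int.eq_zero_of_dvd_of_natAbs_lt_natAbs h (by omega)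
    omega
  · intro h; rw [h]; simp

lemma dvd_neg_iff (n : ℕ) (hn : 0 < n) (a b : ℤ) (ha : 0 ≤ a) (ha' : a ≤ n)
    (hb : 0 ≤ b) (hb' : b ≤ n) :
    (2*(n:ℤ)) ∣ ((-1)*a - b) ↔ (a = b ∧ (a = 0 ∨ a = (n:ℤ))) := by
  constructor
  · intro h
    by_cases hc : a + b = 2*(n:ℤ)
    · omega
    · have := Int.eq_zero_of_dvd_of_natAbs_lt_natAbs h (by omega)
      omega
  · rintro ⟨rfl, (h | h)⟩
    · subst h; simp
    · subst h; refine ⟨-1, by ring⟩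

lemma ell_eval (n : ℕ) (hn : 0 < n) (j k : ℤ × ℤ) (hj : j ∈ Xi2 n) (hk : k ∈ Xi2 n) :
    ell2 n k (pt2 n j) = if k = j then 1 else 0 := by
  obtain ⟨⟨hj1, hj1'⟩, ⟨hj2, hj2'⟩, hjp⟩ := (mem_Xi2 n j).mp hj
  obtain ⟨⟨hk1, hk1'⟩, ⟨hk2, hk2'⟩, hkp⟩ := (mem_Xi2 n k).mp hk
  rw [ell2]
  have harg : ∀ ε₁ ε₂ : ℤ,
      (((ε₁:ℤ):ℝ) * (pt2 n j).1 - (k.1 : ℝ) / (2 * n), ((ε₂:ℤ):ℝ) * (pt2 n j).2 - (k.2 : ℝ) / (2 * n))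
        = pt2 n (ε₁ * j.1 - k.1, ε₂ * j.2 - k.2) := by
    intro ε₁ ε₂
    rw [pt2, pt2]
    dsimp only
    simp only [Prod.mk.injEq]
    constructor <;> push_cast <;> ring
  have hval : ∀ ε₁ ε₂ : ℤ, (ε₁ = -1 ∨ ε₁ = 1) → (ε₂ = -1 ∨ ε₂ = 1) →
      PhiStar n (pt2 n (ε₁ * j.1 - k.1, ε₂ * j.2 - k.2))
        = if ((2*(n:ℤ)) ∣ (ε₁ * j.1 - k.1) ∧ (2*(n:ℤ)) ∣ (ε₂ * j.2 - k.2)) then 1 else 0 := by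
    intro ε₁ ε₂ h1 h2
    refine Phi_eval n hn _ ?_
    dsimp only
    rcases h1 with rfl | rfl <;> rcases h2 with rfl | rfl <;> omega
  have hsum : ∀ ε ∈ (({-1, 1} : Finset ℤ) ×ˢ ({-1, 1} : Finset ℤ)),
      PhiStar n ((ε.1 : ℝ) * (pt2 n j).1 - (k.1 : ℝ) / (2 * n), (ε.2 : ℝ) * (pt2 n j).2 - (k.2 : ℝ) / (2 * n))
      = if ((2*(n:ℤ)) ∣ (ε.1 * j.1 - k.1) ∧ (2*(n:ℤ)) ∣ (ε.2 * j.2 - k.2)) then (1:ℂ) else 0 := by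
    intro ε hε
    simp only [Finset.mem_product, Finset.mem_insert, Finset.mem_singleton] at hε
    rw [harg ε.1 ε.2, hval ε.1 ε.2 hε.1 hε.2]
  rw [Finset.sum_congr rfl hsum]
  have hne : (-1 : ℤ) ≠ 1 := by norm_num
  rw [Finset.sum_product, Finset.sum_pair hne, Finset.sum_pair hne, Finset.sum_pair hne]
  have c1 := dvd_sub_iff n hn j.1 k.1 hj1 hj1' hk1 hk1'
  have c2 := dvd_sub_iff n hn j.2 k.2 hj2 hj2' hk2 hk2'
  have d1 := dvd_neg_iff n hn j.1 k.1 hj1 hj1' hk1 hk1'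
  have d2 := dvd_neg_iff n hn j.2 k.2 hj2 hj2' hk2 hk2'
  simp only [c1, c2, d1, d2]
  by_cases hD1 : j.1 = k.1
  · by_cases hD2 : j.2 = k.2
    · have hkj : k = j := Prod.ext hD1.symm hD2.symm
      rw [if_pos hkj]
      simp only [hD1, hD2, eq_self_iff_true, true_and, and_true]
      by_cases hE1 : k.1 = 0 ∨ k.1 = (n:ℤ) <;> by_cases hE2 : k.2 = 0 ∨ k.2 = (n:ℤ)
      · rw [if_pos ⟨hE1, hE2⟩, if_pos hE1, if_pos hE2, lam2,
           if_neg (by omega), if_pos ⟨hE1, hE2⟩]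
        norm_num
      · rw [if_neg (fun h => hE2 h.2), if_pos hE1, if_neg hE2, lam2,
           if_neg (by omega), if_neg (fun h => hE2 h.2)]
        norm_num
      · rw [if_neg (fun h => hE1 h.1), if_neg hE1, if_pos hE2, lam2,
           if_neg (by omega), if_neg (fun h => hE1 h.1)]
        norm_num
      · rw [if_neg (fun h => hE1 h.1), if_neg hE1, if_neg hE2, lam2,
           if_pos (by omega)]
        norm_num
    · have hkj : ¬ (k = j) := fun h => hD2 (by rw [h])
      rw [if_neg hkj]
      simp [hD2]
  · have hkj : ¬ (k = j) := fun h => hD1 (by rw [h])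
    rw [if_neg hkj]
    simp [hD1]


theorem algebraic_interpolation_nodes_2d (n : ℕ) (hn : 0 < n) :
    (∀ f : ℝ × ℝ → ℂ, ∀ j ∈ Xi2 n,
      ∑ k ∈ Xi2 n, f (pt2 n k) * ell2 n k (pt2 n j) = f (pt2 n j)) ∧
    (∀ j ∈ Xi2 n, ∀ k ∈ Xi2 n, ell2 n k (pt2 n j) = if k = j then 1 else 0) := by
  constructor
  · intro f j hj
    calc ∑ k ∈ Xi2 n, f (pt2 n k) * ell2 n k (pt2 n j)
        = ∑ k ∈ Xi2 n, if k = j then f (pt2 n k) else 0 := by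
          refine Finset.sum_congr rfl fun k hk => ?_
          rw [ell_eval n hn j k hj hk, mul_ite, mul_one, mul_zero]
      _ = f (pt2 n j) := by
          rw [Finset.sum_ite_eq' (Xi2 n) j (fun k => f (pt2 n k)), if_pos hj]
  · intro j hj k hk
    exact ell_eval n hn j k hj hk
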